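/- Let F be a field and A = M_d(F) with d ≥ 2, and suppose that d ≠ 2 or char(F) ≠ 2. Then A has exactly four Lie ideals: 0, the scalar matrices F·I, the set [A,A] of all matrices with trace zero, and A itself. -/

import Mathlib

open Matrix

section LieIdealAux
variable {F : Type*} [Field F] {d : ℕ}

local notation "E" => fun (i j : Fin d) => Matrix.single i j (1 : F)

private lemma EmulE (i j k l : Fin d) :
    E i j * E k l = if j = k then E i l else 0 := by
  split
  next h => subst h; simp
  next h => exact Matrix.single_mul_single_of_ne (c := (1:F)) i j _ h _

private lemma sandwich (i j k l : Fin d) (x : Matrix (Fin d) (Fin d) F) :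
    E i j * x * E k l = x j k • E i l := by
  ext a b
  simp [Matrix.mul_apply, Matrix.single, ite_mul, mul_ite,
    Matrix.smul_apply]
  rw [Finset.sum_eq_single k, Finset.sum_eq_single j] <;> aesop

variable {L : Submodule F (Matrix (Fin d) (Fin d) F)}

private lemma lie_mem' (hL : ∀ l ∈ L, ∀ a : Matrix (Fin d) (Fin d) F, l * a - a * l ∈ L)
    {x : Matrix (Fin d) (Fin d) F} (hx : x ∈ L) (a : Matrix (Fin d) (Fin d) F) :
    a * x - x * a ∈ L := by
  have := L.neg_mem (hL x hx a)
  simpa using this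

private lemma smul_mem_extract {c : F} (hc : c ≠ 0) {i j : Fin d}
    (h : c • (E i j) ∈ L) : E i j ∈ L :=
  (Submodule.smul_mem_iff L hc).mp h

/-- If `x ∈ L` has a nonzero off-diagonal entry `x j i ≠ 0` and char ≠ 2,
then `E i j ∈ L`. -/
private lemma step1a (hL : ∀ l ∈ L, ∀ a : Matrix (Fin d) (Fin d) F, l * a - a * l ∈ L)
    (h2 : (2 : F) ≠ 0) {i j : Fin d} (hij : i ≠ j)
    {x : Matrix (Fin d) (Fin d) F} (hx : x ∈ L) (hxe : x j i ≠ 0) :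
    E i j ∈ L := by
  set e : Matrix (Fin d) (Fin d) F := E i j with he
  have hy : e * x - x * e ∈ L := lie_mem' hL hx e
  have hz : e * (e * x - x * e) - (e * x - x * e) * e ∈ L := lie_mem' hL hy e
  have hee : e * e = 0 := by rw [he, EmulE]; simp [Ne.symm hij]
  have hid : e * (e * x - x * e) - (e * x - x * e) * e = (-(2 * x j i)) • e := by
    simp only [mul_sub, sub_mul, ← mul_assoc]
    rw [hee, zero_mul, mul_assoc x e e, hee, mul_zero, he, sandwich]
    module
  rw [hid] at hz
  exact smul_mem_extract (by simpa using ⟨h2, hxe⟩) hz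

/-- Same but with a third index `k` instead of char ≠ 2. -/
private lemma step1b (hL : ∀ l ∈ L, ∀ a : Matrix (Fin d) (Fin d) F, l * a - a * l ∈ L)
    {i j k : Fin d} (hij : i ≠ j) (hki : k ≠ i) (hkj : k ≠ j)
    {x : Matrix (Fin d) (Fin d) F} (hx : x ∈ L) (hxe : x j i ≠ 0) :
    E i j ∈ L := by
  have hy : E i j * x - x * E i j ∈ L := lie_mem' hL hx _
  have hw : E i k * (E i j * x - x * E i j) - (E i j * x - x * E i j) * E i k ∈ L :=
    lie_mem' hL hy _
  have hwid : E i k * (E i j * x - x * E i j) - (E i j * x - x * E i j) * E i k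
      = (-(x k i)) • E i j + (-(x j i)) • E i k := by
    simp only [mul_sub, sub_mul, ← mul_assoc]
    rw [EmulE i k i j, if_neg hki, zero_mul, sandwich i k i j x,
      sandwich i j i k x, mul_assoc x, EmulE i j i k, if_neg (Ne.symm hij), mul_zero]
    module
  rw [hwid] at hw
  have hv : ((-(x k i)) • E i j + (-(x j i)) • E i k) * E k j
      - E k j * ((-(x k i)) • E i j + (-(x j i)) • E i k) ∈ L := hL _ hw _
  have hvid : ((-(x k i)) • E i j + (-(x j i)) • E i k) * E k j
      - E k j * ((-(x k i)) • E i j + (-(x j i)) • E i k) = (-(x j i)) • E i j := by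
    rw [add_mul, mul_add, smul_mul_assoc, smul_mul_assoc, mul_smul_comm, mul_smul_comm,
      EmulE i j k j, EmulE i k k j, EmulE k j i j, EmulE k j i k,
      if_neg (Ne.symm hkj), if_pos rfl, if_neg (Ne.symm hij), if_neg (Ne.symm hij)]
    module
  rw [hvid] at hv
  exact smul_mem_extract (by simpa using hxe) hv

/-- Diagonal nonscalar case. -/
private lemma step1c (hL : ∀ l ∈ L, ∀ a : Matrix (Fin d) (Fin d) F, l * a - a * l ∈ L)
    {i j : Fin d} (hij : i ≠ j) {x : Matrix (Fin d) (Fin d) F} (hx : x ∈ L)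
    (hdiag : ∀ p q : Fin d, p ≠ q → x p q = 0) (hne : x i i ≠ x j j) :
    E i j ∈ L := by
  have hm : x * E i j - E i j * x ∈ L := hL x hx _
  have hid : x * E i j - E i j * x = (x i i - x j j) • E i j := by
    ext a b
    simp only [Matrix.sub_apply, Matrix.smul_apply]
    by_cases ha : a = i <;> by_cases hb : b = j
    · subst ha; subst hb; simp
    · subst ha
      have h1 : x j b = 0 := hdiag _ _ fun h => hb h.symm
      simp [hb, h1, Ne.symm hb]
    · subst hb
      have h1 : x a i = 0 := hdiag _ _ ha
      simp [ha, h1, Ne.symm ha]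
    · simp [ha, hb, Ne.symm ha]
  rw [hid] at hm
  exact smul_mem_extract (sub_ne_zero.mpr hne) hm

/-- From one off-diagonal matrix unit, all of them. -/
private lemma step2 (hL : ∀ l ∈ L, ∀ a : Matrix (Fin d) (Fin d) F, l * a - a * l ∈ L)
    (hd : 2 ≤ d) (h : d ≠ 2 ∨ ringChar F ≠ 2)
    {i j : Fin d} (hij : i ≠ j) (hE : E i j ∈ L) :
    ∀ k l : Fin d, k ≠ l → E k l ∈ L := by
  have brE : ∀ k l p q : Fin d, l = p → q ≠ k → (E k l ∈ L ∨ E p q ∈ L) → E k q ∈ L := by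
    rintro k l p q rfl hqk hmem
    have hid : E k l * E l q - E l q * E k l = E k q := by
      rw [EmulE, EmulE, if_pos rfl, if_neg hqk, sub_zero]
    rcases hmem with hm | hm
    · have := hL _ hm (E l q); rwa [hid] at this
    · have := lie_mem' hL hm (E k l); rwa [hid] at this
  have row : ∀ k : Fin d, k ≠ j → E k j ∈ L := fun k hk =>
    brE k i i j rfl (Ne.symm hk) (Or.inr hE)
  have gen1 : ∀ k l : Fin d, k ≠ j → k ≠ l → E k l ∈ L := fun k l hkj hkl =>
    brE k j j l rfl (Ne.symm hkl) (Or.inl (row k hkj))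
  have genj : ∀ l : Fin d, l ≠ j → l ≠ i → E j l ∈ L := fun l hlj hli =>
    brE j i i l rfl hlj (Or.inr (gen1 i l hij fun h => hli h.symm))
  have hji : E j i ∈ L := by
    rcases h with hd2 | hchar
    · have h3 : 3 ≤ d := by omega
      have : ∃ m : Fin d, m ≠ i ∧ m ≠ j := by
        by_contra hc
        push_neg at hc
        have hsub : (Finset.univ : Finset (Fin d)) ⊆ {i, j} := by
          intro m _
          rcases eq_or_ne m i with rfl | hm
          · simp
          · simp [hc m hm]
        have h1 := Finset.card_le_card hsub
        simp only [Finset.card_univ, Fintype.card_fin] at h1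
        have h22 : ({i, j} : Finset (Fin d)).card ≤ 2 := by
          apply (Finset.card_insert_le _ _).trans
          simp
        omega
      obtain ⟨m, hmi, hmj⟩ := this
      exact brE j m m i rfl hij (Or.inl (genj m hmj hmi))
    · have h2 : (2 : F) ≠ 0 := Ring.two_ne_zero hchar
      have hdg : E i i - E j j ∈ L := by
        have := hL _ hE (E j i)
        rwa [EmulE, EmulE, if_pos rfl, if_pos rfl] at this
      have hb2 : (E i i - E j j) * E j i - E j i * (E i i - E j j) ∈ L := hL _ hdg _
      have hid2 : (E i i - E j j) * E j i - E j i * (E i i - E j j)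
          = (-2 : F) • E j i := by
        rw [sub_mul, mul_sub, EmulE, EmulE, EmulE, EmulE,
          if_neg hij, if_pos rfl, if_pos rfl, if_neg hij]
        module
      rw [hid2] at hb2
      exact (Submodule.smul_mem_iff L (neg_ne_zero.mpr h2)).mp hb2
  intro k l hkl
  rcases eq_or_ne k j with rfl | hkj
  · rcases eq_or_ne l i with rfl | hli
    · exact hji
    · exact genj l (Ne.symm hkl) hli
  · exact gen1 k l hkj hkl

/-- All matrix units give all trace-zero matrices. -/
private lemma step3 (hL : ∀ l ∈ L, ∀ a : Matrix (Fin d) (Fin d) F, l * a - a * l ∈ L)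
    (hd : 2 ≤ d) (hAll : ∀ k l : Fin d, k ≠ l → E k l ∈ L) :
    ∀ x : Matrix (Fin d) (Fin d) F, Matrix.trace x = 0 → x ∈ L := by
  haveI : NeZero d := ⟨by omega⟩
  have hdiag : ∀ k l : Fin d, (E k k - E l l : Matrix (Fin d) (Fin d) F) ∈ L := by
    intro k l
    rcases eq_or_ne k l with rfl | hkl
    · simpa using L.zero_mem
    · have := hL _ (hAll k l hkl) (E l k)
      rwa [EmulE, EmulE, if_pos rfl, if_pos rfl] at this
  intro x hx
  have hsum : x = ∑ i : Fin d, ∑ j : Fin d,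
      (if i = j then x i j • (E i i - E (0 : Fin d) 0) else x i j • E i j) := by
    have expand : ∀ i j : Fin d,
        (if i = j then x i j • (E i i - E (0 : Fin d) 0) else x i j • E i j)
          = x i j • E i j - (if i = j then x i j • E (0 : Fin d) 0 else 0) := by
      intro i j
      split
      next h => subst h; rw [smul_sub]
      next _ => rw [sub_zero]
    simp only [expand, Finset.sum_sub_distrib]
    have e1 : ∑ i : Fin d, ∑ j : Fin d, x i j • (E i j) = x := by
      conv_rhs => rw [matrix_eq_sum_single x]
      simp [Matrix.smul_single]
    have e2 : ∑ i : Fin d, ∑ j : Fin d, (if i = j then x i j • (E (0 : Fin d) 0) else 0)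
        = Matrix.trace x • E (0 : Fin d) 0 := by
      simp [Matrix.trace, Matrix.diag, Finset.sum_smul]
    rw [e1, e2, hx, zero_smul, sub_zero]
  rw [hsum]
  refine Submodule.sum_mem _ fun i _ => Submodule.sum_mem _ fun j _ => ?_
  split
  next h => exact Submodule.smul_mem _ _ (hdiag i 0)
  next h => exact Submodule.smul_mem _ _ (hAll i j h)

end LieIdealAux

/-- **Lemma 3.1 (folklore).** Let `F` be a field and `A = M_d(F)` with `d ≥ 2`, and suppose
`d ≠ 2` or `char F ≠ 2`.  Then `A` has exactly four Lie ideals: `0`, the scalar matrices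
`F·I`, the set of trace-zero matrices (which equals `[A,A]`), and `A` itself.
Formalized: an `F`-subspace `L` of `M_d(F)` is a Lie ideal iff it is one of the four. -/
theorem stmt_2 (F : Type*) [Field F] (d : ℕ) (hd : 2 ≤ d)
    (h : d ≠ 2 ∨ ringChar F ≠ 2)
    (L : Submodule F (Matrix (Fin d) (Fin d) F)) :
    (∀ l ∈ L, ∀ a : Matrix (Fin d) (Fin d) F, l * a - a * l ∈ L) ↔
      (L = ⊥ ∨
       L = Submodule.span F {(1 : Matrix (Fin d) (Fin d) F)} ∨
       (L : Set (Matrix (Fin d) (Fin d) F)) = {x | Matrix.trace x = 0} ∨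
       L = ⊤) := by
  haveI : NeZero d := ⟨by omega⟩
  constructor
  · intro hL
    by_cases hsc : ∀ x ∈ L, ∃ c : F, x = c • (1 : Matrix (Fin d) (Fin d) F)
    · by_cases hbot : L = ⊥
      · exact Or.inl hbot
      · refine Or.inr (Or.inl ?_)
        obtain ⟨x, hxL, hx0⟩ := (Submodule.ne_bot_iff L).mp hbot
        obtain ⟨c, rfl⟩ := hsc x hxL
        have hc : c ≠ 0 := fun hc0 => hx0 (by simp [hc0])
        apply le_antisymm
        · intro y hy
          obtain ⟨c', rfl⟩ := hsc y hy
          exact Submodule.mem_span_singleton.mpr ⟨c', rfl⟩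
        · rw [Submodule.span_le, Set.singleton_subset_iff]
          have h1 : (1 : Matrix (Fin d) (Fin d) F) = c⁻¹ • (c • 1) := by
            rw [smul_smul, inv_mul_cancel₀ hc, one_smul]
          rw [SetLike.mem_coe, h1]
          exact Submodule.smul_mem _ _ hxL
    · push_neg at hsc
      obtain ⟨x, hxL, hxns⟩ := hsc
      have hEex : ∃ i j : Fin d, i ≠ j ∧ Matrix.single i j (1 : F) ∈ L := by
        by_cases hoff : ∃ p q : Fin d, p ≠ q ∧ x q p ≠ 0
        · obtain ⟨p, q, hpq, hx0⟩ := hoff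
          rcases h with hd2 | hchar
          · have h3 : 3 ≤ d := by omega
            have hex : ∃ k : Fin d, k ≠ p ∧ k ≠ q := by
              by_contra hc
              push_neg at hc
              have hsub : (Finset.univ : Finset (Fin d)) ⊆ {p, q} := by
                intro m _
                rcases eq_or_ne m p with rfl | hm
                · simp
                · simp [hc m hm]
              have h1 := Finset.card_le_card hsub
              simp only [Finset.card_univ, Fintype.card_fin] at h1
              have h22 : ({p, q} : Finset (Fin d)).card ≤ 2 := by
                apply (Finset.card_insert_le _ _).trans
                simp
              omega
            obtain ⟨k, hkp, hkq⟩ := hex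
            exact ⟨p, q, hpq, step1b hL hpq hkp hkq hxL hx0⟩
          · exact ⟨p, q, hpq, step1a hL (Ring.two_ne_zero hchar) hpq hxL hx0⟩
        · push_neg at hoff
          have hdg : ∀ p q : Fin d, p ≠ q → x p q = 0 := fun p q hpq =>
            hoff q p (Ne.symm hpq)
          have hex : ∃ i j : Fin d, x i i ≠ x j j := by
            by_contra hc
            push_neg at hc
            refine hxns (x 0 0) ?_
            ext a b
            rcases eq_or_ne a b with rfl | hab
            · simp [Matrix.smul_apply, Matrix.one_apply, hc a 0]
            · simp [Matrix.smul_apply, Matrix.one_apply, hab, hdg a b hab]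
          obtain ⟨i, j, hne⟩ := hex
          have hij : i ≠ j := fun hc => hne (by rw [hc])
          exact ⟨i, j, hij, step1c hL hij hxL hdg hne⟩
      obtain ⟨i, j, hij, hEij⟩ := hEex
      have hAll := step2 hL hd h hij hEij
      have hsl := step3 hL hd hAll
      by_cases htr : ∀ y ∈ L, Matrix.trace y = 0
      · refine Or.inr (Or.inr (Or.inl ?_))
        ext y
        simp only [SetLike.mem_coe, Set.mem_setOf_eq]
        exact ⟨fun hy => htr y hy, fun hy => hsl y hy⟩
      · refine Or.inr (Or.inr (Or.inr ?_))
        push_neg at htr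
        obtain ⟨x₀, hx₀L, hx₀⟩ := htr
        rw [eq_top_iff]
        intro y _
        have hz : y - (Matrix.trace y / Matrix.trace x₀) • x₀ ∈ L := by
          apply hsl
          rw [Matrix.trace_sub, Matrix.trace_smul, smul_eq_mul,
            div_mul_cancel₀ _ hx₀, sub_self]
        have := L.add_mem hz (L.smul_mem (Matrix.trace y / Matrix.trace x₀) hx₀L)
        simpa using this
  · rintro (rfl | rfl | hset | rfl)
    · intro l hl a
      simp only [Submodule.mem_bot] at hl
      simp [hl]
    · intro l hl a
      obtain ⟨c, hc⟩ := Submodule.mem_span_singleton.mp hl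
      have : l * a - a * l = 0 := by
        rw [← hc, smul_mul_assoc, mul_smul_comm, one_mul, mul_one, sub_self]
      rw [this]
      exact Submodule.zero_mem _
    · intro l hl a
      have h1 : Matrix.trace l = 0 := by
        have hm : l ∈ (L : Set (Matrix (Fin d) (Fin d) F)) := hl
        rw [hset] at hm
        exact hm
      have h2 : Matrix.trace (l * a - a * l) = 0 := by
        rw [Matrix.trace_sub, Matrix.trace_mul_comm l a, sub_self]
      have hm : l * a - a * l ∈ (L : Set (Matrix (Fin d) (Fin d) F)) := by
        rw [hset]
        exact h2
      exact hm
    · intro l _ a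
      exact Submodule.mem_top
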